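/- Let N ≥ 1 and let A be a bounded subset of ℝ^N equipped with the Euclidean distance. Then there exists a map K from A into the Gromov–Hausdorff space such that for all x, y ∈ A: d_GH(K(x), K(y)) ≤ ‖x − y‖₂ ≤ √N · d_GH(K(x), K(y)). In particular, every bounded subset of Euclidean space embeds into the Gromov–Hausdorff space by a bilipschitz map. -/

import Mathlib

open GromovHausdorff Metric Set

namespace GHEmbedAux

/-- auxiliary coordinate extractor -/
noncomputable def eps (N : ℕ) (x : EuclideanSpace ℝ (Fin N)) (k : ℕ) : ℝ :=
  if h : 0 < k ∧ k - 1 < N then x ⟨k - 1, h.2⟩ else 0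

/-- the scale function -/
noncomputable def coordFn (N : ℕ) (M : ℝ) (x : EuclideanSpace ℝ (Fin N)) (k : ℕ) : ℝ :=
  8 * M * k + 2 * eps N x k

/-- the distance function on `Fin (N+1)` -/
noncomputable def dFn (N : ℕ) (M : ℝ) (x : EuclideanSpace ℝ (Fin N))
    (i j : Fin (N + 1)) : ℝ :=
  if i = j then 0 else coordFn N M x (max i.val j.val)

lemma abs_eps_le {N : ℕ} {M : ℝ} {x : EuclideanSpace ℝ (Fin N)} (hM : 0 ≤ M)
    (hx : ∀ i, |x i| ≤ M) (k : ℕ) : |eps N x k| ≤ M := by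
  unfold eps
  split
  · exact hx _
  · simpa using hM

lemma eps_zero {N : ℕ} (x : EuclideanSpace ℝ (Fin N)) : eps N x 0 = 0 := by
  simp [eps]

lemma coordFn_zero {N : ℕ} (M : ℝ) (x : EuclideanSpace ℝ (Fin N)) :
    coordFn N M x 0 = 0 := by
  simp [coordFn, eps_zero]

lemma eps_succ {N : ℕ} (x : EuclideanSpace ℝ (Fin N)) (n : Fin N) :
    eps N x (n.val + 1) = x n := by
  unfold eps
  rw [dif_pos ⟨Nat.succ_pos _, by simpa using n.isLt⟩]
  exact congrArg (fun i : Fin N => x i) (Fin.ext (Nat.add_sub_cancel _ _))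

lemma coordFn_succ {N : ℕ} (M : ℝ) (x : EuclideanSpace ℝ (Fin N)) (n : Fin N) :
    coordFn N M x (n.val + 1) = 8 * M * (n.val + 1) + 2 * x n := by
  rw [coordFn, eps_succ]
  push_cast
  ring

/-- strict separation across scales -/
lemma sep' {N : ℕ} {M : ℝ} {x y : EuclideanSpace ℝ (Fin N)} (hM : 1 ≤ M)
    (hx : ∀ i, |x i| ≤ M) (hy : ∀ i, |y i| ≤ M) {k l : ℕ} (hkl : k < l) :
    4 * M ≤ coordFn N M y l - coordFn N M x k := by
  have hM0 : (0 : ℝ) ≤ M := by linarith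
  have h1 := abs_le.1 (abs_eps_le hM0 hx k)
  have h2 := abs_le.1 (abs_eps_le hM0 hy l)
  have hcast : (k : ℝ) + 1 ≤ (l : ℝ) := by exact_mod_cast hkl
  unfold coordFn
  nlinarith [h1.1, h1.2, h2.1, h2.2]

lemma sep {N : ℕ} {M : ℝ} {x y : EuclideanSpace ℝ (Fin N)} (hM : 1 ≤ M)
    (hx : ∀ i, |x i| ≤ M) (hy : ∀ i, |y i| ≤ M) {k l : ℕ} (hkl : k ≠ l) :
    4 * M ≤ |coordFn N M y l - coordFn N M x k| := by
  rcases lt_or_gt_of_ne hkl with h | h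
  · exact le_trans (sep' hM hx hy h) (le_abs_self _)
  · have := sep' hM hy hx h
    rw [abs_sub_comm]
    exact le_trans (by linarith) (le_abs_self _)

lemma coordFn_pos {N : ℕ} {M : ℝ} {x : EuclideanSpace ℝ (Fin N)} (hM : 1 ≤ M)
    (hx : ∀ i, |x i| ≤ M) {k : ℕ} (hk : 0 < k) : 4 * M ≤ coordFn N M x k := by
  have := sep' (x := x) (y := x) hM hx hx hk
  rwa [coordFn_zero, sub_zero] at this

lemma coordFn_nonneg {N : ℕ} {M : ℝ} {x : EuclideanSpace ℝ (Fin N)} (hM : 1 ≤ M)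
    (hx : ∀ i, |x i| ≤ M) (k : ℕ) : 0 ≤ coordFn N M x k := by
  rcases Nat.eq_zero_or_pos k with rfl | hk
  · rw [coordFn_zero]
  · have := coordFn_pos hM hx hk
    linarith

lemma coordFn_mono {N : ℕ} {M : ℝ} {x : EuclideanSpace ℝ (Fin N)} (hM : 1 ≤ M)
    (hx : ∀ i, |x i| ≤ M) {k l : ℕ} (hkl : k ≤ l) :
    coordFn N M x k ≤ coordFn N M x l := by
  rcases eq_or_lt_of_le hkl with rfl | h
  · exact le_rfl
  · have := sep' (x := x) (y := x) hM hx hx h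
    linarith

lemma dFn_nonneg {N : ℕ} {M : ℝ} {x : EuclideanSpace ℝ (Fin N)} (hM : 1 ≤ M)
    (hx : ∀ i, |x i| ≤ M) (i j : Fin (N + 1)) : 0 ≤ dFn N M x i j := by
  unfold dFn
  split
  · exact le_rfl
  · exact coordFn_nonneg hM hx _

lemma dFn_triangle {N : ℕ} {M : ℝ} {x : EuclideanSpace ℝ (Fin N)} (hM : 1 ≤ M)
    (hx : ∀ i, |x i| ≤ M) (i j k : Fin (N + 1)) :
    dFn N M x i k ≤ dFn N M x i j + dFn N M x j k := by
  have hnn := dFn_nonneg hM hx (x := x)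
  by_cases hik : i = k
  · have e0 : dFn N M x i k = 0 := by rw [dFn, if_pos hik]
    rw [e0]; linarith [hnn i j, hnn j k]
  by_cases hij : i = j
  · have e1 : dFn N M x i j = 0 := by rw [dFn, if_pos hij]
    have e2 : dFn N M x j k = dFn N M x i k := by rw [hij]
    rw [e1, e2]; linarith [hnn i k]
  by_cases hjk : j = k
  · have e1 : dFn N M x j k = 0 := by rw [dFn, if_pos hjk]
    have e2 : dFn N M x i j = dFn N M x i k := by rw [hjk]
    rw [e1, e2]; linarith [hnn i k]
  rw [dFn, dFn, dFn, if_neg hik, if_neg hij, if_neg hjk]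
  have h1 : 0 ≤ coordFn N M x (max i.val j.val) := coordFn_nonneg hM hx _
  have h2 : 0 ≤ coordFn N M x (max j.val k.val) := coordFn_nonneg hM hx _
  rcases max_choice i.val k.val with h | h
  · rw [h]
    have : coordFn N M x i.val ≤ coordFn N M x (max i.val j.val) :=
      coordFn_mono hM hx (le_max_left _ _)
    linarith
  · rw [h]
    have : coordFn N M x k.val ≤ coordFn N M x (max j.val k.val) :=
      coordFn_mono hM hx (le_max_right _ _)
    linarith

/-- the coordinate distance is at most the Euclidean distance -/
lemma coord_dist_le {N : ℕ} (x y : EuclideanSpace ℝ (Fin N)) (i : Fin N) :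
    |x i - y i| ≤ dist x y := by
  rw [EuclideanSpace.dist_eq]
  have h1 : |x i - y i| = Real.sqrt (dist (x i) (y i) ^ 2) := by
    rw [Real.sqrt_sq_eq_abs, Real.dist_eq, abs_abs]
  rw [h1]
  apply Real.sqrt_le_sqrt
  exact Finset.single_le_sum (f := fun j => dist (x j) (y j) ^ 2)
    (fun j _ => sq_nonneg _) (Finset.mem_univ i)

lemma eps_close {N : ℕ} (x y : EuclideanSpace ℝ (Fin N)) (k : ℕ) :
    |eps N x k - eps N y k| ≤ dist x y := by
  unfold eps
  split
  · exact coord_dist_le x y _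
  · simpa using dist_nonneg

lemma dFn_close {N : ℕ} (M : ℝ) (x y : EuclideanSpace ℝ (Fin N)) (i j : Fin (N + 1)) :
    |dFn N M x i j - dFn N M y i j| ≤ 2 * dist x y := by
  unfold dFn
  split
  · simpa using dist_nonneg
  · have h : coordFn N M x (max i.val j.val) - coordFn N M y (max i.val j.val)
        = 2 * (eps N x (max i.val j.val) - eps N y (max i.val j.val)) := by
      unfold coordFn; ring
    rw [h, abs_mul, abs_two]
    have := eps_close x y (max i.val j.val)
    linarith

/-- type synonym carrying the metric indexed by `x` -/
def Pt (N : ℕ) (_x : EuclideanSpace ℝ (Fin N)) : Type := Fin (N + 1)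

instance (N : ℕ) (x : EuclideanSpace ℝ (Fin N)) : Nonempty (Pt N x) :=
  inferInstanceAs (Nonempty (Fin (N + 1)))

instance (N : ℕ) (x : EuclideanSpace ℝ (Fin N)) : Finite (Pt N x) :=
  inferInstanceAs (Finite (Fin (N + 1)))

def ptEquiv (N : ℕ) (x : EuclideanSpace ℝ (Fin N)) : Fin (N + 1) ≃ Pt N x :=
  Equiv.refl (Fin (N + 1))

/-- the metric space structure -/
noncomputable def PtMS (N : ℕ) (M : ℝ) (x : EuclideanSpace ℝ (Fin N)) (hM : 1 ≤ M)
    (hx : ∀ i, |x i| ≤ M) : MetricSpace (Pt N x) where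
  dist p q := dFn N M x p q
  dist_self p := by
    show dFn N M x p p = 0
    unfold dFn; exact if_pos rfl
  dist_comm p q := by
    show dFn N M x p q = dFn N M x q p
    unfold dFn
    rcases eq_or_ne (show Fin (N + 1) from p) (show Fin (N + 1) from q) with h | h
    · rw [if_pos h, if_pos h.symm]
    · rw [if_neg h, if_neg (Ne.symm h), Nat.max_comm]
  dist_triangle p q r := dFn_triangle hM hx p q r
  eq_of_dist_eq_zero := by
    intro p q hpq
    by_contra hne
    have h : (show Fin (N + 1) from p) ≠ (show Fin (N + 1) from q) := hne
    have hpq' : dFn N M x p q = 0 := hpq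
    unfold dFn at hpq'; rw [if_neg h] at hpq'
    have hv : (show Fin (N + 1) from p).val ≠ (show Fin (N + 1) from q).val :=
      fun hh => h (Fin.ext hh)
    have hmax : 0 < max (show Fin (N + 1) from p).val (show Fin (N + 1) from q).val := by
      rcases Nat.eq_zero_or_pos (max (show Fin (N + 1) from p).val
        (show Fin (N + 1) from q).val) with h0 | h0
      · rw [Nat.max_eq_zero_iff] at h0
        exact absurd (h0.1.trans h0.2.symm) hv
      · exact h0
    have := coordFn_pos hM hx hmax
    rw [hpq'] at this
    linarith

lemma PtMS_dist {N : ℕ} {M : ℝ} {x : EuclideanSpace ℝ (Fin N)} (hM : 1 ≤ M)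
    (hx : ∀ i, |x i| ≤ M) (i j : Fin (N + 1)) :
    @dist _ (PtMS N M x hM hx).toDist (ptEquiv N x i) (ptEquiv N x j) = dFn N M x i j :=
  rfl

/-- upper bound: GH distance at most the Euclidean distance -/
lemma upper_aux {N : ℕ} {M : ℝ} (x y : EuclideanSpace ℝ (Fin N))
    {X Y : Type} [MetricSpace X] [CompactSpace X] [Nonempty X]
    [MetricSpace Y] [CompactSpace Y] [Nonempty Y]
    (fX : Fin (N + 1) ≃ X) (fY : Fin (N + 1) ≃ Y)
    (hfX : ∀ i j, dist (fX i) (fX j) = dFn N M x i j)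
    (hfY : ∀ i j, dist (fY i) (fY j) = dFn N M y i j) :
    ghDist X Y ≤ dist x y := by
  have main := ghDist_le_of_approx_subsets (X := X) (Y := Y) (s := (univ : Set X))
    (Φ := fun p => fY (fX.symm p.val)) (ε₁ := 0) (ε₂ := 2 * dist x y) (ε₃ := 0)
    (fun z => ⟨z, mem_univ z, by simp⟩)
    (fun w => ⟨⟨fX (fY.symm w), mem_univ _⟩, by simp⟩)
    (fun p q => by
      have h1 : dist (p : X) (q : X) = dFn N M x (fX.symm p.val) (fX.symm q.val) := by
        rw [← hfX (fX.symm p.val) (fX.symm q.val)]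
        simp [Subtype.dist_eq]
      have h2 : dist (fY (fX.symm p.val)) (fY (fX.symm q.val))
          = dFn N M y (fX.symm p.val) (fX.symm q.val) := hfY _ _
      rw [Subtype.dist_eq, h1, h2]
      exact dFn_close M x y _ _)
  have heq : (0 : ℝ) + 2 * dist x y / 2 + 0 = dist x y := by ring
  rwa [heq] at main

/-- lower bound: coordinate distance at most the GH distance -/
lemma lower_aux {N : ℕ} {M : ℝ} (hM : 1 ≤ M) (x y : EuclideanSpace ℝ (Fin N))
    (hx : ∀ i, |x i| ≤ M) (hy : ∀ i, |y i| ≤ M)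
    {X Y : Type} [MetricSpace X] [CompactSpace X] [Nonempty X]
    [MetricSpace Y] [CompactSpace Y] [Nonempty Y]
    (fX : Fin (N + 1) ≃ X) (fY : Fin (N + 1) ≃ Y)
    (hfX : ∀ i j, dist (fX i) (fX j) = dFn N M x i j)
    (hfY : ∀ i j, dist (fY i) (fY j) = dFn N M y i j)
    (n : Fin N) : |x n - y n| ≤ ghDist X Y := by
  obtain ⟨Φ, Ψ, hΦ, hΨ, hr⟩ := ghDist_eq_hausdorffDist X Y
  set r := ghDist X Y with hrdef
  have hr0 : 0 ≤ r := by
    rw [hrdef, ghDist]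
    exact dist_nonneg
  have hne : EMetric.hausdorffEdist (range Φ) (range Ψ) ≠ ⊤ :=
    hausdorffEdist_ne_top_of_nonempty_of_bounded (range_nonempty _) (range_nonempty _)
      (isCompact_range hΦ.continuous).isBounded (isCompact_range hΨ.continuous).isBounded
  refine le_of_forall_pos_le_add fun δ hδ => ?_
  set a := Φ (fX 0) with ha
  set b := Φ (fX n.succ) with hb
  have hab : dist a b = coordFn N M x (n.val + 1) := by
    rw [ha, hb, hΦ.dist_eq, hfX]
    have h0 : (0 : Fin (N + 1)) ≠ n.succ := (Fin.succ_ne_zero n).symm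
    rw [dFn, if_neg h0]
    simp
  obtain ⟨a', ha'mem, ha'⟩ := exists_dist_lt_of_hausdorffDist_lt (mem_range_self _)
    (show hausdorffDist (range Φ) (range Ψ) < r + δ / 2 by rw [← hr]; linarith) hne
  obtain ⟨b', hb'mem, hb'⟩ := exists_dist_lt_of_hausdorffDist_lt (mem_range_self _)
    (show hausdorffDist (range Φ) (range Ψ) < r + δ / 2 by rw [← hr]; linarith) hne
  obtain ⟨w, hw⟩ := ha'mem
  obtain ⟨w', hw'⟩ := hb'mem
  have hDab' : dist a' b' = dFn N M y (fY.symm w) (fY.symm w') := by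
    rw [← hw, ← hw', hΨ.dist_eq, ← hfY (fY.symm w) (fY.symm w')]
    simp
  -- distance comparison
  have hcmp : |dist a' b' - dist a b| ≤ dist a a' + dist b b' := by
    have := dist_dist_dist_le a b a' b'
    rw [Real.dist_eq, abs_sub_comm] at this
    exact this
  -- key: 2 |x n - y n| ≤ |dist a' b' - dist a b|
  have hxyn : |x n - y n| ≤ 2 * M := by
    have h1 := abs_le.1 (hx n); have h2 := abs_le.1 (hy n)
    rw [abs_le]; constructor <;> linarith
  have key : 2 * |x n - y n| ≤ |dist a' b' - dist a b| := by
    rw [hDab', hab]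
    set q := fY.symm w
    set q' := fY.symm w'
    rcases eq_or_ne q q' with hqq | hqq
    · rw [dFn, if_pos hqq, zero_sub, abs_neg,
        abs_of_nonneg (coordFn_nonneg hM hx _)]
      have := coordFn_pos hM hx (Nat.succ_pos n.val)
      linarith
    · rw [dFn, if_neg hqq]
      rcases eq_or_ne (max q.val q'.val) (n.val + 1) with hm | hm
      · rw [hm]
        have hxy : coordFn N M y (n.val + 1) - coordFn N M x (n.val + 1)
            = 2 * (y n - x n) := by
          rw [coordFn_succ, coordFn_succ]; ring
        rw [hxy, abs_mul, abs_two, abs_sub_comm]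
      · have hsep := sep (x := x) (y := y) hM hx hy (Ne.symm hm)
        linarith [hxyn]
  have : 2 * |x n - y n| < 2 * r + δ + δ := by
    calc 2 * |x n - y n| ≤ |dist a' b' - dist a b| := key
      _ ≤ dist a a' + dist b b' := hcmp
      _ < (r + δ / 2) + (r + δ / 2) := add_lt_add ha' hb'
      _ ≤ 2 * r + δ + δ := by linarith
  linarith

end GHEmbedAux

open GHEmbedAux

/-- A bounded subset of Euclidean space embeds into the Gromov–Hausdorff space by a
bilipschitz map: d_GH(K x, K y) ≤ ‖x - y‖₂ ≤ √N ⋅ d_GH(K x, K y). -/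
theorem bounded_subset_euclidean_bilipschitz_embedding_GH {N : ℕ} (hN : 1 ≤ N)
    (A : Set (EuclideanSpace ℝ (Fin N))) (hA : Bornology.IsBounded A) :
    ∃ K : A → GromovHausdorff.GHSpace,
      ∀ x y : A,
        dist (K x) (K y) ≤ dist (x : EuclideanSpace ℝ (Fin N)) (y : EuclideanSpace ℝ (Fin N)) ∧
        dist (x : EuclideanSpace ℝ (Fin N)) (y : EuclideanSpace ℝ (Fin N)) ≤
          Real.sqrt N * dist (K x) (K y) := by
  -- get a uniform bound on coordinates
  obtain ⟨C, hC⟩ := hA.subset_closedBall 0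
  set M : ℝ := max C 1 with hMdef
  have hM : (1 : ℝ) ≤ M := le_max_right _ _
  have hbound : ∀ a : A, ∀ i, |(a : EuclideanSpace ℝ (Fin N)) i| ≤ M := by
    intro a i
    have h1 : dist (a : EuclideanSpace ℝ (Fin N)) 0 ≤ C := by
      have := hC a.2
      simpa [Metric.mem_closedBall] using this
    have h2 := coord_dist_le (a : EuclideanSpace ℝ (Fin N)) 0 i
    have h0 : (0 : EuclideanSpace ℝ (Fin N)) i = 0 := rfl
    rw [h0, sub_zero] at h2
    exact h2.trans (h1.trans (le_max_left _ _))
  -- the embedding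
  refine ⟨fun a =>
    letI := PtMS N M (a : EuclideanSpace ℝ (Fin N)) hM (hbound a)
    GromovHausdorff.toGHSpace (Pt N (a : EuclideanSpace ℝ (Fin N))), fun x y => ?_⟩
  letI iX := PtMS N M (x : EuclideanSpace ℝ (Fin N)) hM (hbound x)
  letI iY := PtMS N M (y : EuclideanSpace ℝ (Fin N)) hM (hbound y)
  have hupper : GromovHausdorff.ghDist (Pt N (x : EuclideanSpace ℝ (Fin N)))
      (Pt N (y : EuclideanSpace ℝ (Fin N))) ≤
      dist (x : EuclideanSpace ℝ (Fin N)) (y : EuclideanSpace ℝ (Fin N)) :=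
    upper_aux _ _ (ptEquiv N _) (ptEquiv N _) (fun i j => rfl) (fun i j => rfl)
  have hlower : ∀ n : Fin N, |(x : EuclideanSpace ℝ (Fin N)) n -
      (y : EuclideanSpace ℝ (Fin N)) n| ≤
      GromovHausdorff.ghDist (Pt N (x : EuclideanSpace ℝ (Fin N)))
        (Pt N (y : EuclideanSpace ℝ (Fin N))) :=
    fun n => lower_aux hM _ _ (hbound x) (hbound y)
      (ptEquiv N _) (ptEquiv N _) (fun i j => rfl) (fun i j => rfl) n
  set r := GromovHausdorff.ghDist (Pt N (x : EuclideanSpace ℝ (Fin N)))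
      (Pt N (y : EuclideanSpace ℝ (Fin N))) with hrdef
  have hr0 : 0 ≤ r := by
    rw [hrdef, GromovHausdorff.ghDist]; exact dist_nonneg
  constructor
  · exact hupper
  · rw [EuclideanSpace.dist_eq]
    have hsum : (∑ i, dist ((x : EuclideanSpace ℝ (Fin N)) i)
        ((y : EuclideanSpace ℝ (Fin N)) i) ^ 2) ≤ N * r ^ 2 := by
      calc (∑ i, dist ((x : EuclideanSpace ℝ (Fin N)) i)
            ((y : EuclideanSpace ℝ (Fin N)) i) ^ 2)
          ≤ ∑ _i : Fin N, r ^ 2 := by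
            apply Finset.sum_le_sum
            intro i _
            have hi := hlower i
            rw [← Real.dist_eq] at hi
            exact pow_le_pow_left₀ dist_nonneg hi 2
        _ = N * r ^ 2 := by
            rw [Finset.sum_const, Finset.card_univ, Fintype.card_fin, nsmul_eq_mul]
    calc Real.sqrt (∑ i, dist ((x : EuclideanSpace ℝ (Fin N)) i)
          ((y : EuclideanSpace ℝ (Fin N)) i) ^ 2)
        ≤ Real.sqrt (N * r ^ 2) := Real.sqrt_le_sqrt hsum
      _ = Real.sqrt N * r := by
          rw [Real.sqrt_mul (Nat.cast_nonneg N), Real.sqrt_sq hr0]
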